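/- The function V₀ : S^M → [0,∞), defined as the pointwise limit V₀(π)=lim_{N→∞}(𝕄^N h)(π), is continuous on S^M (including the boundary of the simplex). -/

import Mathlib

open MeasureTheory Finset Filter
open scoped ENNReal

noncomputable section

/-- The analytic data of the change-diagnosis problem: a σ-finite reference measure `m`
on the observation space, probability densities `f₀, …, f_M`, the geometric parameter
`p ∈ (0,1)`, the prior `ν` on the change index, the delay cost `c > 0` and the
terminal-decision costs `a_{ij}` (with `a_{ii} = 0`). -/
structure DiagSetup (E : Type*) [MeasurableSpace E] (M : ℕ) : Type _ where
  /-- σ-finite reference measure -/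
  m : Measure E
  hm : SigmaFinite m
  /-- `f 0` is the pre-change density, `f i.succ` the post-change densities -/
  f : Fin (M + 1) → E → ℝ
  hf_meas : ∀ i, Measurable (f i)
  hf_nonneg : ∀ i x, 0 ≤ f i x
  hf_int : ∀ i, ∫ x, f i x ∂m = 1
  p : ℝ
  hp : p ∈ Set.Ioo (0 : ℝ) 1
  ν : Fin M → ℝ
  hν : ∀ i, 0 < ν i
  hνsum : ∑ i, ν i = 1
  c : ℝ
  hc : 0 < c
  a : Fin (M + 1) → Fin M → ℝ
  ha : ∀ i j, 0 ≤ a i j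
  haii : ∀ i : Fin M, a i.succ i = 0
  hM : 1 ≤ M

namespace DiagSetup

variable {E : Type*} [MeasurableSpace E] {M : ℕ}

/-- `D_i(π, x)`:  `D₀(π,x) = (1-p)π₀f₀(x)` and `D_i(π,x) = (π_i + π₀ p ν_i) f_i(x)`. -/
def D (S : DiagSetup E M) (i : Fin (M + 1)) (π : Fin (M + 1) → ℝ) (x : E) : ℝ :=
  Fin.cases ((1 - S.p) * π 0 * S.f 0 x)
    (fun j => (π j.succ + π 0 * S.p * S.ν j) * S.f j.succ x) i

/-- `D(π, x) = Σ_{i=0}^M D_i(π, x)`. -/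
def Dsum (S : DiagSetup E M) (π : Fin (M + 1) → ℝ) (x : E) : ℝ :=
  ∑ i, S.D i π x

/-- The operator `T`:
`(Tg)(π) = ∫_E D(π,x) g(D₀(π,x)/D(π,x), …, D_M(π,x)/D(π,x)) m(dx)`,
with the integrand interpreted as `0` where `D(π,x) = 0`. -/
def T (S : DiagSetup E M) (g : (Fin (M + 1) → ℝ) → ℝ) (π : Fin (M + 1) → ℝ) : ℝ :=
  ∫ x, (if S.Dsum π x = 0 then 0
        else S.Dsum π x * g fun i => S.D i π x / S.Dsum π x) ∂S.m

/-- `h_j(π) = Σ_{i=0}^M π_i a_{ij}`. -/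
def hj (S : DiagSetup E M) (j : Fin M) (π : Fin (M + 1) → ℝ) : ℝ :=
  ∑ i : Fin (M + 1), π i * S.a i j

/-- `h(π) = min_{j∈{1,…,M}} h_j(π)`. -/
def hmin (S : DiagSetup E M) (π : Fin (M + 1) → ℝ) : ℝ :=
  ⨅ j : Fin M, S.hj j π

/-- The dynamic-programming operator `(𝕄g)(π) = min{h(π), c(1-π₀) + (Tg)(π)}`. -/
def Mop (S : DiagSetup E M) (g : (Fin (M + 1) → ℝ) → ℝ) (π : Fin (M + 1) → ℝ) : ℝ :=
  min (S.hmin π) (S.c * (1 - π 0) + S.T g π)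

/-- `V^N = 𝕄^N h`, the value functions of the truncated problems. -/
def V (S : DiagSetup E M) (N : ℕ) : (Fin (M + 1) → ℝ) → ℝ :=
  S.Mop^[N] S.hmin

end DiagSetup

section Aux

namespace DiagSetup

variable {E : Type*} [MeasurableSpace E] {M : ℕ} (S : DiagSetup E M)

local notation "Sx" => stdSimplex ℝ (Fin (M + 1))

lemma nonempty_finM (S : DiagSetup E M) : Nonempty (Fin M) := ⟨⟨0, S.hM⟩⟩

lemma nu_le_one (j : Fin M) : S.ν j ≤ 1 := by
  rw [← S.hνsum]
  exact Finset.single_le_sum (fun i _ => (S.hν i).le) (Finset.mem_univ _)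

lemma D_nonneg {π : Fin (M + 1) → ℝ} (hπ : π ∈ Sx) (i : Fin (M + 1)) (x : E) :
    0 ≤ S.D i π x := by
  induction i using Fin.cases with
  | zero =>
    simp only [D, Fin.cases_zero]
    exact mul_nonneg (mul_nonneg (by linarith [S.hp.2]) (hπ.1 0)) (S.hf_nonneg 0 x)
  | succ j =>
    simp only [D, Fin.cases_succ]
    exact mul_nonneg (add_nonneg (hπ.1 _)
      (mul_nonneg (mul_nonneg (hπ.1 0) S.hp.1.le) (S.hν j).le)) (S.hf_nonneg _ x)

lemma D_le {π : Fin (M + 1) → ℝ} (hπ : π ∈ Sx) (i : Fin (M + 1)) (x : E) :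
    S.D i π x ≤ 2 * S.f i x := by
  have hf := S.hf_nonneg i x
  have h0 : π 0 ≤ 1 := (mem_Icc_of_mem_stdSimplex hπ 0).2
  have h0' : 0 ≤ π 0 := hπ.1 0
  induction i using Fin.cases with
  | zero =>
    simp only [D, Fin.cases_zero]
    have hp1 : 0 < S.p := S.hp.1
    have hp2 : S.p < 1 := S.hp.2
    have hcoef : (1 - S.p) * π 0 ≤ 2 := by nlinarith
    calc (1 - S.p) * π 0 * S.f 0 x ≤ 2 * S.f 0 x :=
          mul_le_mul_of_nonneg_right hcoef hf
      _ = 2 * S.f 0 x := rfl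
  | succ j =>
    simp only [D, Fin.cases_succ]
    have h1 : π j.succ ≤ 1 := (mem_Icc_of_mem_stdSimplex hπ _).2
    have h2 : S.ν j ≤ 1 := S.nu_le_one j
    have h3 : 0 < S.ν j := S.hν j
    have hp1 : 0 < S.p := S.hp.1
    have hp2 : S.p < 1 := S.hp.2
    have h4 : 0 ≤ π j.succ := hπ.1 _
    have c1 : π 0 * S.p ≤ 1 := by nlinarith
    have c2 : π 0 * S.p * S.ν j ≤ 1 := by nlinarith
    have hcoef : π j.succ + π 0 * S.p * S.ν j ≤ 2 := by linarith
    exact mul_le_mul_of_nonneg_right hcoef hf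

lemma Dsum_nonneg {π : Fin (M + 1) → ℝ} (hπ : π ∈ Sx) (x : E) : 0 ≤ S.Dsum π x :=
  Finset.sum_nonneg fun i _ => S.D_nonneg hπ i x

lemma Dsum_le {π : Fin (M + 1) → ℝ} (hπ : π ∈ Sx) (x : E) :
    S.Dsum π x ≤ 2 * ∑ i, S.f i x := by
  rw [Finset.mul_sum]
  exact Finset.sum_le_sum fun i _ => S.D_le hπ i x

lemma D_linear (i : Fin (M + 1)) (a b : ℝ) (π π' : Fin (M + 1) → ℝ) (x : E) :
    S.D i (a • π + b • π') x = a * S.D i π x + b * S.D i π' x := by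
  induction i using Fin.cases with
  | zero =>
    simp only [D, Fin.cases_zero, Pi.add_apply, Pi.smul_apply, smul_eq_mul]
    ring
  | succ j =>
    simp only [D, Fin.cases_succ, Pi.add_apply, Pi.smul_apply, smul_eq_mul]
    ring

lemma Dsum_linear (a b : ℝ) (π π' : Fin (M + 1) → ℝ) (x : E) :
    S.Dsum (a • π + b • π') x = a * S.Dsum π x + b * S.Dsum π' x := by
  simp only [Dsum, D_linear, Finset.sum_add_distrib, Finset.mul_sum]

lemma D_eq_zero {π : Fin (M + 1) → ℝ} (hπ : π ∈ Sx) {x : E}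
    (h : S.Dsum π x = 0) (i : Fin (M + 1)) : S.D i π x = 0 :=
  (Finset.sum_eq_zero_iff_of_nonneg (fun i _ => S.D_nonneg hπ i x)).1 h i (Finset.mem_univ i)

lemma measurable_D (π : Fin (M + 1) → ℝ) (i : Fin (M + 1)) :
    Measurable fun x => S.D i π x := by
  induction i using Fin.cases with
  | zero =>
    simp only [D, Fin.cases_zero]
    exact (S.hf_meas 0).const_mul _
  | succ j =>
    simp only [D, Fin.cases_succ]
    exact (S.hf_meas j.succ).const_mul _

lemma measurable_Dsum (π : Fin (M + 1) → ℝ) : Measurable fun x => S.Dsum π x :=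
  Finset.measurable_sum _ fun i _ => S.measurable_D π i

lemma continuous_D (i : Fin (M + 1)) (x : E) : Continuous fun π => S.D i π x := by
  induction i using Fin.cases with
  | zero =>
    simp only [D, Fin.cases_zero]
    exact Continuous.mul (by fun_prop) continuous_const
  | succ j =>
    simp only [D, Fin.cases_succ]
    exact Continuous.mul (by fun_prop) continuous_const

lemma continuous_Dsum (x : E) : Continuous fun π => S.Dsum π x :=
  continuous_finset_sum _ fun i _ => S.continuous_D i x

/-- The post-observation posterior, sent to a fixed vertex of the simplex when `Dsum = 0`. -/
def phi (π : Fin (M + 1) → ℝ) (x : E) : Fin (M + 1) → ℝ :=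
  if S.Dsum π x = 0 then Pi.single 0 1 else fun i => S.D i π x / S.Dsum π x

lemma phi_mem {π : Fin (M + 1) → ℝ} (hπ : π ∈ Sx) (x : E) : S.phi π x ∈ Sx := by
  unfold phi
  split_ifs with h
  · exact single_mem_stdSimplex ℝ 0
  · refine ⟨fun i => div_nonneg (S.D_nonneg hπ i x) (S.Dsum_nonneg hπ x), ?_⟩
    rw [← Finset.sum_div]
    exact div_self h

lemma measurable_phi (π : Fin (M + 1) → ℝ) : Measurable (S.phi π) := by
  unfold phi
  refine Measurable.ite (measurableSet_eq_fun (S.measurable_Dsum π) measurable_const)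
    measurable_const ?_
  exact measurable_pi_lambda _ fun i => (S.measurable_D π i).div (S.measurable_Dsum π)

/-- The integrand of `T g` in junk-point form. -/
def itg (g : (Fin (M + 1) → ℝ) → ℝ) (π : Fin (M + 1) → ℝ) (x : E) : ℝ :=
  S.Dsum π x * g (S.phi π x)

lemma itg_eq (g : (Fin (M + 1) → ℝ) → ℝ) (π : Fin (M + 1) → ℝ) (x : E) :
    (if S.Dsum π x = 0 then 0
      else S.Dsum π x * g fun i => S.D i π x / S.Dsum π x) = S.itg g π x := by
  by_cases h : S.Dsum π x = 0 <;> simp [itg, phi, h]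

lemma T_eq (g : (Fin (M + 1) → ℝ) → ℝ) (π : Fin (M + 1) → ℝ) :
    S.T g π = ∫ x, S.itg g π x ∂S.m := by
  unfold T
  exact congrArg _ (funext fun x => S.itg_eq g π x)

end DiagSetup

end Aux
section Aux2

namespace DiagSetup

variable {E : Type*} [MeasurableSpace E] {M : ℕ} (S : DiagSetup E M)

local notation "Sx" => stdSimplex ℝ (Fin (M + 1))

lemma integrable_f (i : Fin (M + 1)) : Integrable (S.f i) S.m := by
  by_contra h
  have := MeasureTheory.integral_undef h
  rw [S.hf_int i] at this
  exact one_ne_zero this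

lemma integrable_fsum : Integrable (fun x => 2 * ∑ i, S.f i x) S.m :=
  (MeasureTheory.integrable_finset_sum _ fun i _ => S.integrable_f i).const_mul 2

lemma aesm_itg {g : (Fin (M + 1) → ℝ) → ℝ} (hg : ContinuousOn g Sx)
    {π : Fin (M + 1) → ℝ} (hπ : π ∈ Sx) :
    AEStronglyMeasurable (S.itg g π) S.m := by
  have hψ : Measurable fun x => (⟨S.phi π x, S.phi_mem hπ x⟩ : Sx) :=
    (S.measurable_phi π).subtype_mk
  have hcomp : Measurable fun x => g (S.phi π x) :=
    (hg.restrict.measurable).comp hψ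
  exact ((S.measurable_Dsum π).mul hcomp).aestronglyMeasurable

lemma norm_itg_le {g : (Fin (M + 1) → ℝ) → ℝ} {A : ℝ}
    (hg0 : ∀ π ∈ Sx, 0 ≤ g π) (hgA : ∀ π ∈ Sx, g π ≤ A)
    {π : Fin (M + 1) → ℝ} (hπ : π ∈ Sx) (x : E) :
    ‖S.itg g π x‖ ≤ A * (2 * ∑ i, S.f i x) := by
  have hφ := S.phi_mem hπ x
  have h1 : 0 ≤ S.itg g π x :=
    mul_nonneg (S.Dsum_nonneg hπ x) (hg0 _ hφ)
  have hA : 0 ≤ A := le_trans (hg0 _ hφ) (hgA _ hφ)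
  rw [Real.norm_eq_abs, abs_of_nonneg h1]
  calc S.Dsum π x * g (S.phi π x) ≤ S.Dsum π x * A :=
        mul_le_mul_of_nonneg_left (hgA _ hφ) (S.Dsum_nonneg hπ x)
    _ ≤ (2 * ∑ i, S.f i x) * A :=
        mul_le_mul_of_nonneg_right (S.Dsum_le hπ x) hA
    _ = A * (2 * ∑ i, S.f i x) := mul_comm _ _

lemma integrable_itg {g : (Fin (M + 1) → ℝ) → ℝ} {A : ℝ}
    (hg : ContinuousOn g Sx) (hg0 : ∀ π ∈ Sx, 0 ≤ g π) (hgA : ∀ π ∈ Sx, g π ≤ A)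
    {π : Fin (M + 1) → ℝ} (hπ : π ∈ Sx) :
    Integrable (S.itg g π) S.m := by
  refine Integrable.mono' (S.integrable_fsum.const_mul A) (S.aesm_itg hg hπ) ?_
  exact Filter.Eventually.of_forall fun x => by
    simpa [mul_assoc] using S.norm_itg_le hg0 hgA hπ x

lemma T_nonneg {g : (Fin (M + 1) → ℝ) → ℝ} (hg0 : ∀ π ∈ Sx, 0 ≤ g π)
    {π : Fin (M + 1) → ℝ} (hπ : π ∈ Sx) : 0 ≤ S.T g π := by
  rw [S.T_eq]
  exact MeasureTheory.integral_nonneg fun x =>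
    mul_nonneg (S.Dsum_nonneg hπ x) (hg0 _ (S.phi_mem hπ x))

lemma T_mono {g₁ g₂ : (Fin (M + 1) → ℝ) → ℝ} {A : ℝ}
    (hg₁ : ContinuousOn g₁ Sx) (hg₁0 : ∀ π ∈ Sx, 0 ≤ g₁ π) (hg₁A : ∀ π ∈ Sx, g₁ π ≤ A)
    (hg₂ : ContinuousOn g₂ Sx) (hg₂0 : ∀ π ∈ Sx, 0 ≤ g₂ π) (hg₂A : ∀ π ∈ Sx, g₂ π ≤ A)
    (hle : ∀ π ∈ Sx, g₁ π ≤ g₂ π)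
    {π : Fin (M + 1) → ℝ} (hπ : π ∈ Sx) : S.T g₁ π ≤ S.T g₂ π := by
  rw [S.T_eq, S.T_eq]
  refine MeasureTheory.integral_mono (S.integrable_itg hg₁ hg₁0 hg₁A hπ)
    (S.integrable_itg hg₂ hg₂0 hg₂A hπ) fun x => ?_
  exact mul_le_mul_of_nonneg_left (hle _ (S.phi_mem hπ x)) (S.Dsum_nonneg hπ x)

/-- A uniform bound for all the value functions. -/
def Abnd : ℝ := ∑ i, ∑ j, S.a i j

lemma Abnd_nonneg : 0 ≤ S.Abnd :=
  Finset.sum_nonneg fun i _ => Finset.sum_nonneg fun j _ => S.ha i j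

lemma hj_nonneg (j : Fin M) {π : Fin (M + 1) → ℝ} (hπ : π ∈ Sx) : 0 ≤ S.hj j π :=
  Finset.sum_nonneg fun i _ => mul_nonneg (hπ.1 i) (S.ha i j)

lemma hj_le (j : Fin M) {π : Fin (M + 1) → ℝ} (hπ : π ∈ Sx) : S.hj j π ≤ S.Abnd := by
  refine Finset.sum_le_sum fun i _ => ?_
  calc π i * S.a i j ≤ 1 * S.a i j :=
        mul_le_mul_of_nonneg_right (mem_Icc_of_mem_stdSimplex hπ i).2 (S.ha i j)
    _ = S.a i j := one_mul _
    _ ≤ ∑ j', S.a i j' := Finset.single_le_sum (fun j' _ => S.ha i j') (Finset.mem_univ j)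

lemma hmin_eq (π : Fin (M + 1) → ℝ) :
    S.hmin π = Finset.univ.inf' ⟨⟨0, S.hM⟩, Finset.mem_univ _⟩ (fun j => S.hj j π) := by
  haveI := S.nonempty_finM
  exact (Finset.inf'_univ_eq_ciInf _).symm

lemma hmin_nonneg {π : Fin (M + 1) → ℝ} (hπ : π ∈ Sx) : 0 ≤ S.hmin π := by
  rw [S.hmin_eq]
  exact Finset.le_inf' _ _ fun j _ => S.hj_nonneg j hπ

lemma hmin_le {π : Fin (M + 1) → ℝ} (hπ : π ∈ Sx) : S.hmin π ≤ S.Abnd := by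
  rw [S.hmin_eq]
  exact le_trans (Finset.inf'_le _ (Finset.mem_univ ⟨0, S.hM⟩)) (S.hj_le _ hπ)

lemma continuous_hj (j : Fin M) : Continuous (S.hj j) := by
  unfold hj; fun_prop

lemma continuous_hmin : Continuous S.hmin := by
  have : S.hmin = fun π => Finset.univ.inf' ⟨⟨0, S.hM⟩, Finset.mem_univ _⟩
      (fun j => S.hj j π) := funext fun π => S.hmin_eq π
  rw [this]
  rw [continuous_iff_continuousAt]
  intro π
  exact ContinuousAt.finset_inf'_apply _ fun j _ => (S.continuous_hj j).continuousAt

lemma hj_linear (j : Fin M) (a b : ℝ) (π π' : Fin (M + 1) → ℝ) :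
    S.hj j (a • π + b • π') = a * S.hj j π + b * S.hj j π' := by
  simp only [hj, Finset.mul_sum, ← Finset.sum_add_distrib, Pi.add_apply, Pi.smul_apply,
    smul_eq_mul]
  exact Finset.sum_congr rfl fun i _ => by ring

lemma concave_hmin : ConcaveOn ℝ Sx S.hmin := by
  refine ⟨convex_stdSimplex ℝ _, fun π hπ π' hπ' a b ha hb hab => ?_⟩
  rw [S.hmin_eq (a • π + b • π')]
  refine Finset.le_inf' _ _ fun j _ => ?_
  rw [S.hj_linear]
  have h1 : S.hmin π ≤ S.hj j π := by
    rw [S.hmin_eq]; exact Finset.inf'_le _ (Finset.mem_univ j)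
  have h2 : S.hmin π' ≤ S.hj j π' := by
    rw [S.hmin_eq]; exact Finset.inf'_le _ (Finset.mem_univ j)
  simp only [smul_eq_mul]
  exact add_le_add (mul_le_mul_of_nonneg_left h1 ha) (mul_le_mul_of_nonneg_left h2 hb)

end DiagSetup

end Aux2
section Aux3

namespace DiagSetup

variable {E : Type*} [MeasurableSpace E] {M : ℕ} (S : DiagSetup E M)

local notation "Sx" => stdSimplex ℝ (Fin (M + 1))

lemma itg_concave {g : (Fin (M + 1) → ℝ) → ℝ}
    (hgc : ConcaveOn ℝ Sx g) (hg0 : ∀ π ∈ Sx, 0 ≤ g π) (x : E)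
    {π π' : Fin (M + 1) → ℝ} (hπ : π ∈ Sx) (hπ' : π' ∈ Sx)
    {a b : ℝ} (ha : 0 ≤ a) (hb : 0 ≤ b) (hab : a + b = 1) :
    a * S.itg g π x + b * S.itg g π' x ≤ S.itg g (a • π + b • π') x := by
  have hcomb : a • π + b • π' ∈ Sx := (convex_stdSimplex ℝ _) hπ hπ' ha hb hab
  set s0 := S.Dsum π x with hs0
  set s1 := S.Dsum π' x with hs1
  have hs0n : 0 ≤ s0 := S.Dsum_nonneg hπ x
  have hs1n : 0 ≤ s1 := S.Dsum_nonneg hπ' x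
  have hs2 : S.Dsum (a • π + b • π') x = a * s0 + b * s1 := S.Dsum_linear a b π π' x
  by_cases h2 : S.Dsum (a • π + b • π') x = 0
  · -- everything vanishes
    have ha0 : a * s0 = 0 := by
      have h1 : 0 ≤ a * s0 := mul_nonneg ha hs0n
      have h2' : 0 ≤ b * s1 := mul_nonneg hb hs1n
      have := hs2 ▸ h2
      linarith
    have hb0 : b * s1 = 0 := by
      have h1 : 0 ≤ a * s0 := mul_nonneg ha hs0n
      have h2' : 0 ≤ b * s1 := mul_nonneg hb hs1n
      have := hs2 ▸ h2
      linarith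
    have hzero : a * S.itg g π x + b * S.itg g π' x = 0 := by
      simp only [itg, ← hs0, ← hs1]
      linear_combination g (S.phi π x) * ha0 + g (S.phi π' x) * hb0
    have hr : S.itg g (a • π + b • π') x = 0 := by simp [itg, h2]
    rw [hr]
    exact le_of_eq hzero
  · have hs2pos : 0 < S.Dsum (a • π + b • π') x :=
      lt_of_le_of_ne (S.Dsum_nonneg hcomb x) (Ne.symm h2)
    set s2 := S.Dsum (a • π + b • π') x with hs2def
    set w0 := a * s0 / s2 with hw0
    set w1 := b * s1 / s2 with hw1
    have hw0n : 0 ≤ w0 := div_nonneg (mul_nonneg ha hs0n) hs2pos.le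
    have hw1n : 0 ≤ w1 := div_nonneg (mul_nonneg hb hs1n) hs2pos.le
    have hwsum : w0 + w1 = 1 := by
      rw [hw0, hw1, ← add_div, ← hs2]
      exact div_self (ne_of_gt hs2pos)
    have hq0 : S.phi π x ∈ Sx := S.phi_mem hπ x
    have hq1 : S.phi π' x ∈ Sx := S.phi_mem hπ' x
    have hkey : S.phi (a • π + b • π') x = w0 • S.phi π x + w1 • S.phi π' x := by
      funext i
      have hφc : S.phi (a • π + b • π') x i = S.D i (a • π + b • π') x / s2 := by
        rw [phi, if_neg h2]
      rw [hφc, S.D_linear, Pi.add_apply, Pi.smul_apply, Pi.smul_apply, smul_eq_mul,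
        smul_eq_mul]
      have hterm : ∀ (u : Fin (M + 1) → ℝ) (hu : u ∈ Sx) (cc : ℝ) (hcc : 0 ≤ cc),
          cc * S.D i u x / s2 = cc * S.Dsum u x / s2 * S.phi u x i := by
        intro u hu cc hcc
        by_cases hsu : S.Dsum u x = 0
        · rw [hsu, S.D_eq_zero hu hsu i]
          ring
        · rw [phi, if_neg hsu]
          field_simp
      rw [add_div, hterm π hπ a ha, hterm π' hπ' b hb]
    have hgineq : w0 * g (S.phi π x) + w1 * g (S.phi π' x)
        ≤ g (S.phi (a • π + b • π') x) := by
      rw [hkey]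
      simpa [smul_eq_mul] using hgc.2 hq0 hq1 hw0n hw1n hwsum
    have := mul_le_mul_of_nonneg_left hgineq hs2pos.le
    calc a * S.itg g π x + b * S.itg g π' x
        = s2 * (w0 * g (S.phi π x) + w1 * g (S.phi π' x)) := by
          rw [hw0, hw1]
          simp only [itg, ← hs0, ← hs1]
          field_simp
      _ ≤ s2 * g (S.phi (a • π + b • π') x) := this
      _ = S.itg g (a • π + b • π') x := rfl

lemma T_concave {g : (Fin (M + 1) → ℝ) → ℝ} {A : ℝ}
    (hg : ContinuousOn g Sx) (hgc : ConcaveOn ℝ Sx g)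
    (hg0 : ∀ π ∈ Sx, 0 ≤ g π) (hgA : ∀ π ∈ Sx, g π ≤ A) :
    ConcaveOn ℝ Sx (S.T g) := by
  refine ⟨convex_stdSimplex ℝ _, fun π hπ π' hπ' a b ha hb hab => ?_⟩
  have hcomb : a • π + b • π' ∈ Sx := (convex_stdSimplex ℝ _) hπ hπ' ha hb hab
  simp only [smul_eq_mul]
  rw [S.T_eq, S.T_eq, S.T_eq, ← MeasureTheory.integral_const_mul,
    ← MeasureTheory.integral_const_mul, ← MeasureTheory.integral_add
      ((S.integrable_itg hg hg0 hgA hπ).const_mul a)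
      ((S.integrable_itg hg hg0 hgA hπ').const_mul b)]
  refine MeasureTheory.integral_mono
    (((S.integrable_itg hg hg0 hgA hπ).const_mul a).add
      ((S.integrable_itg hg hg0 hgA hπ').const_mul b))
    (S.integrable_itg hg hg0 hgA hcomb) fun x => ?_
  exact S.itg_concave hgc hg0 x hπ hπ' ha hb hab

lemma T_continuousOn {g : (Fin (M + 1) → ℝ) → ℝ} {A : ℝ}
    (hg : ContinuousOn g Sx) (hg0 : ∀ π ∈ Sx, 0 ≤ g π) (hgA : ∀ π ∈ Sx, g π ≤ A) :
    ContinuousOn (S.T g) Sx := by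
  have hA : 0 ≤ A := by
    have h := single_mem_stdSimplex ℝ (0 : Fin (M + 1))
    exact le_trans (hg0 _ h) (hgA _ h)
  intro π₀ hπ₀
  have hTeq : ∀ π, S.T g π = ∫ x, S.itg g π x ∂S.m := S.T_eq g
  rw [continuousWithinAt_congr (fun π _ => hTeq π) (hTeq π₀)]
  refine MeasureTheory.continuousWithinAt_of_dominated ?_ ?_
    (S.integrable_fsum.const_mul A) ?_
  · exact eventually_nhdsWithin_of_forall fun π hπ => S.aesm_itg hg hπ
  · exact eventually_nhdsWithin_of_forall fun π hπ =>
      Filter.Eventually.of_forall fun x => by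
        simpa [mul_assoc] using S.norm_itg_le hg0 hgA hπ x
  · refine Filter.Eventually.of_forall fun x => ?_
    by_cases h : S.Dsum π₀ x = 0
    · -- squeeze to zero
      have hval : S.itg g π₀ x = 0 := by simp [itg, h]
      rw [ContinuousWithinAt, hval]
      have hbound : Filter.Tendsto (fun π => A * S.Dsum π x) (nhdsWithin π₀ Sx) (nhds 0) := by
        have := ((S.continuous_Dsum x).continuousAt (x := π₀)).continuousWithinAt (s := Sx)
        have h' : Filter.Tendsto (fun π => S.Dsum π x) (nhdsWithin π₀ Sx) (nhds 0) := by
          rw [← h]; exact this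
        simpa using h'.const_mul A
      refine squeeze_zero_norm' ?_ hbound
      refine eventually_nhdsWithin_of_forall fun π hπ => ?_
      have h1 : 0 ≤ S.itg g π x := mul_nonneg (S.Dsum_nonneg hπ x) (hg0 _ (S.phi_mem hπ x))
      rw [Real.norm_eq_abs, abs_of_nonneg h1]
      calc S.Dsum π x * g (S.phi π x) ≤ S.Dsum π x * A :=
            mul_le_mul_of_nonneg_left (hgA _ (S.phi_mem hπ x)) (S.Dsum_nonneg hπ x)
        _ = A * S.Dsum π x := mul_comm _ _
    · -- here the ratio is continuous
      have hq : S.phi π₀ x ∈ Sx := S.phi_mem hπ₀ x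
      have hratio : ContinuousWithinAt (fun π => fun i => S.D i π x / S.Dsum π x) Sx π₀ := by
        rw [continuousWithinAt_pi]
        intro i
        exact ((S.continuous_D i x).continuousWithinAt).div
          ((S.continuous_Dsum x).continuousWithinAt) h
      have hev : ∀ᶠ π in nhdsWithin π₀ Sx, S.Dsum π x ≠ 0 :=
        ((S.continuous_Dsum x).continuousWithinAt).eventually_ne h
      have hφtendsto : Filter.Tendsto (fun π => S.phi π x) (nhdsWithin π₀ Sx)
          (nhds (S.phi π₀ x)) := by
        have heq : ∀ᶠ π in nhdsWithin π₀ Sx,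
            (fun i => S.D i π x / S.Dsum π x) = S.phi π x :=
          hev.mono fun π hπ => by rw [phi, if_neg hπ]
        have h0 : S.phi π₀ x = fun i => S.D i π₀ x / S.Dsum π₀ x := by
          rw [phi, if_neg h]
        rw [h0]
        exact Filter.Tendsto.congr' heq hratio
      have hφ : Filter.Tendsto (fun π => S.phi π x) (nhdsWithin π₀ Sx)
          (nhdsWithin (S.phi π₀ x) Sx) := by
        rw [tendsto_nhdsWithin_iff]
        exact ⟨hφtendsto, eventually_nhdsWithin_of_forall fun π hπ => S.phi_mem hπ x⟩
      have hgφ : Filter.Tendsto (fun π => g (S.phi π x)) (nhdsWithin π₀ Sx)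
          (nhds (g (S.phi π₀ x))) := Filter.Tendsto.comp (hg _ hq) hφ
      exact (((S.continuous_Dsum x).continuousWithinAt)).mul hgφ

end DiagSetup

end Aux3
section Aux4

namespace DiagSetup

variable {E : Type*} [MeasurableSpace E] {M : ℕ} (S : DiagSetup E M)

local notation "Sx" => stdSimplex ℝ (Fin (M + 1))

/-- The affine delay-cost term. -/
def aff : (Fin (M + 1) → ℝ) → ℝ := fun π => S.c * (1 - π 0)

lemma Mop_eq (g : (Fin (M + 1) → ℝ) → ℝ) : S.Mop g = S.hmin ⊓ (S.aff + S.T g) := rfl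

lemma continuous_aff : Continuous S.aff := by unfold aff; fun_prop

lemma concave_aff : ConcaveOn ℝ Sx S.aff := by
  refine ⟨convex_stdSimplex ℝ _, fun π hπ π' hπ' a b ha hb hab => le_of_eq ?_⟩
  simp only [aff, smul_eq_mul, Pi.add_apply, Pi.smul_apply]
  linear_combination S.c * hab

lemma aff_nonneg {π : Fin (M + 1) → ℝ} (hπ : π ∈ Sx) : 0 ≤ S.aff π :=
  mul_nonneg S.hc.le (by linarith [(mem_Icc_of_mem_stdSimplex hπ 0).2])

/-- The key invariant preserved by the dynamic-programming operator. -/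
def Good (g : (Fin (M + 1) → ℝ) → ℝ) : Prop :=
  ContinuousOn g Sx ∧ ConcaveOn ℝ Sx g ∧ (∀ π ∈ Sx, 0 ≤ g π) ∧ (∀ π ∈ Sx, g π ≤ S.Abnd)

lemma good_hmin : S.Good S.hmin :=
  ⟨S.continuous_hmin.continuousOn, S.concave_hmin,
    fun _ hπ => S.hmin_nonneg hπ, fun _ hπ => S.hmin_le hπ⟩

lemma good_Mop {g : (Fin (M + 1) → ℝ) → ℝ} (hg : S.Good g) : S.Good (S.Mop g) := by
  obtain ⟨hcont, hconc, h0, hA⟩ := hg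
  refine ⟨?_, ?_, ?_, ?_⟩
  · intro π₀ hπ₀
    exact Filter.Tendsto.min S.continuous_hmin.continuousWithinAt
      ((S.continuous_aff.continuousWithinAt).add (S.T_continuousOn hcont h0 hA π₀ hπ₀))
  · rw [S.Mop_eq]
    exact S.concave_hmin.inf (S.concave_aff.add (S.T_concave hcont hconc h0 hA))
  · intro π hπ
    exact le_min (S.hmin_nonneg hπ) (add_nonneg (S.aff_nonneg hπ) (S.T_nonneg h0 hπ))
  · intro π hπ
    exact le_trans (min_le_left _ _) (S.hmin_le hπ)

lemma Mop_mono {g₁ g₂ : (Fin (M + 1) → ℝ) → ℝ} (hg₁ : S.Good g₁) (hg₂ : S.Good g₂)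
    (hle : ∀ π ∈ Sx, g₁ π ≤ g₂ π) {π : Fin (M + 1) → ℝ} (hπ : π ∈ Sx) :
    S.Mop g₁ π ≤ S.Mop g₂ π := by
  refine min_le_min (le_refl _) (add_le_add_right ?_ _)
  exact S.T_mono hg₁.1 hg₁.2.2.1 hg₁.2.2.2 hg₂.1 hg₂.2.2.1 hg₂.2.2.2 hle hπ

lemma V_succ (N : ℕ) : S.V (N + 1) = S.Mop (S.V N) := Function.iterate_succ_apply' _ _ _

lemma good_V : ∀ N, S.Good (S.V N) := by
  intro N
  induction N with
  | zero => exact S.good_hmin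
  | succ N ih => rw [S.V_succ]; exact S.good_Mop ih

lemma V_antitone : ∀ N, ∀ π ∈ Sx, S.V (N + 1) π ≤ S.V N π := by
  intro N
  induction N with
  | zero =>
    intro π hπ
    rw [S.V_succ]
    exact min_le_left _ _
  | succ N ih =>
    intro π hπ
    rw [S.V_succ (N + 1), S.V_succ N]
    exact S.Mop_mono (S.good_Mop (S.good_V N)) (S.good_V N)
      (fun π hπ' => by rw [← S.V_succ]; exact ih π hπ') hπ

lemma V_le_of_le {N K : ℕ} (h : N ≤ K) : ∀ π ∈ Sx, S.V K π ≤ S.V N π := by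
  induction K, h using Nat.le_induction with
  | base => exact fun π _ => le_refl _
  | succ K hNK ih => exact fun π hπ => le_trans (S.V_antitone K π hπ) (ih π hπ)

/-- Inward decomposition of simplex points near a given point (the geometric heart of
the Gale–Klee–Rockafellar-type lower-semicontinuity argument). -/
lemma simplex_decomp {π₀ : Fin (M + 1) → ℝ} (hπ₀ : π₀ ∈ Sx) {t : ℝ}
    (ht0 : 0 < t) (ht1 : t ≤ 1) :
    ∃ δ > 0, ∀ y ∈ Sx, dist y π₀ < δ →
      ∃ z ∈ Sx, y = (1 - t) • π₀ + t • z := by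
  set δ₀ : ℝ := Finset.univ.inf' (⟨0, Finset.mem_univ 0⟩ : Finset.univ.Nonempty)
    (fun i => if π₀ i = 0 then 1 else π₀ i) with hδ₀
  have hδ₀pos : 0 < δ₀ := by
    rw [hδ₀]; refine (Finset.lt_inf'_iff _).2 ?_
    intro i _
    by_cases h : π₀ i = 0
    · simp [h]
    · simpa [h] using lt_of_le_of_ne (hπ₀.1 i) (Ne.symm h)
  refine ⟨t * δ₀, mul_pos ht0 hδ₀pos, fun y hy hdist => ?_⟩
  refine ⟨π₀ + t⁻¹ • (y - π₀), ⟨?_, ?_⟩, ?_⟩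
  · intro i
    simp only [Pi.add_apply, Pi.smul_apply, Pi.sub_apply, smul_eq_mul]
    by_cases h : π₀ i = 0
    · rw [h]
      have := hy.1 i
      have ht' : 0 ≤ t⁻¹ := (inv_nonneg).2 ht0.le
      nlinarith
    · have hcoord : |y i - π₀ i| ≤ dist y π₀ := by
        have := dist_le_pi_dist y π₀ i
        rwa [Real.dist_eq] at this
      have hδ₀le : δ₀ ≤ π₀ i := by
        have h2 := Finset.inf'_le (fun i => if π₀ i = 0 then 1 else π₀ i)
          (Finset.mem_univ i)
        rw [hδ₀]
        simpa [h] using h2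
      have habs : |y i - π₀ i| < t * π₀ i :=
        lt_of_le_of_lt hcoord (lt_of_lt_of_le hdist
          (mul_le_mul_of_nonneg_left hδ₀le ht0.le))
      have hlow : -(t * π₀ i) < y i - π₀ i := neg_lt_of_abs_lt habs
      have : t⁻¹ * (y i - π₀ i) ≥ t⁻¹ * (-(t * π₀ i)) :=
        mul_le_mul_of_nonneg_left hlow.le ((inv_nonneg).2 ht0.le)
      have heq : t⁻¹ * (-(t * π₀ i)) = -π₀ i := by
        field_simp [mul_comm]
      linarith [heq ▸ this]
  · simp only [Pi.add_apply, Pi.smul_apply, Pi.sub_apply, smul_eq_mul]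
    rw [Finset.sum_add_distrib, hπ₀.2, ← Finset.mul_sum, Finset.sum_sub_distrib,
      hy.2, hπ₀.2]
    ring
  · funext i
    simp only [Pi.add_apply, Pi.smul_apply, Pi.sub_apply, smul_eq_mul]
    field_simp
    ring

end DiagSetup

end Aux4
/-- the limit value function `V₀ = lim_N 𝕄^N h` is a continuous
nonnegative function on the whole simplex `S^M` (boundary included). -/
theorem value_function_continuous {E : Type*} [MeasurableSpace E] {M : ℕ}
    (S : DiagSetup E M) (V0 : (Fin (M + 1) → ℝ) → ℝ)
    (hV0 : ∀ π ∈ stdSimplex ℝ (Fin (M + 1)),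
      Tendsto (fun N => S.V N π) atTop (nhds (V0 π))) :
    ContinuousOn V0 (stdSimplex ℝ (Fin (M + 1))) ∧
    ∀ π ∈ stdSimplex ℝ (Fin (M + 1)), 0 ≤ V0 π := by
  set Sx := stdSimplex ℝ (Fin (M + 1)) with hSx
  -- V0 is below every V N on the simplex
  have hVle : ∀ (N : ℕ), ∀ π ∈ Sx, V0 π ≤ S.V N π := by
    intro N π hπ
    refine le_of_tendsto (hV0 π hπ) ?_
    exact Filter.eventually_atTop.2 ⟨N, fun K hK => S.V_le_of_le hK π hπ⟩
  -- V0 is nonnegative on the simplex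
  have hV0nonneg : ∀ π ∈ Sx, 0 ≤ V0 π := by
    intro π hπ
    exact ge_of_tendsto (hV0 π hπ)
      (Filter.Eventually.of_forall fun N => (S.good_V N).2.2.1 π hπ)
  -- V0 is bounded above by Abnd on the simplex
  have hV0le : ∀ π ∈ Sx, V0 π ≤ S.Abnd := fun π hπ =>
    le_trans (hVle 0 π hπ) (S.hmin_le hπ)
  -- V0 is concave on the simplex
  have hV0conc : ConcaveOn ℝ Sx V0 := by
    refine ⟨convex_stdSimplex ℝ _, fun π hπ π' hπ' a b ha hb hab => ?_⟩
    have hcomb : a • π + b • π' ∈ Sx := (convex_stdSimplex ℝ _) hπ hπ' ha hb hab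
    refine le_of_tendsto_of_tendsto'
      (((hV0 π hπ).const_mul a).add ((hV0 π' hπ').const_mul b))
      (hV0 (a • π + b • π') hcomb) fun N => ?_
    simpa [smul_eq_mul] using (S.good_V N).2.1.2 hπ hπ' ha hb hab
  refine ⟨fun π₀ hπ₀ => ?_, hV0nonneg⟩
  rw [ContinuousWithinAt]
  rw [tendsto_order]
  constructor
  · -- lower semicontinuity: the concavity / polytope argument
    intro b hb
    set ε := V0 π₀ - b with hε
    have hεpos : 0 < ε := by simp [hε]; linarith
    have hA1 : 0 < S.Abnd + 1 := by linarith [S.Abnd_nonneg]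
    set t := min 1 (ε / (S.Abnd + 1)) with htdef
    have ht0 : 0 < t := lt_min one_pos (div_pos hεpos hA1)
    have ht1 : t ≤ 1 := min_le_left _ _
    have htA : t * S.Abnd < ε := by
      have h1 : t ≤ ε / (S.Abnd + 1) := min_le_right _ _
      have h2 : t * S.Abnd ≤ ε / (S.Abnd + 1) * S.Abnd :=
        mul_le_mul_of_nonneg_right h1 S.Abnd_nonneg
      have h3 : ε / (S.Abnd + 1) * S.Abnd < ε := by
        rw [div_mul_eq_mul_div, div_lt_iff₀ hA1]
        nlinarith [S.Abnd_nonneg]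
      linarith
    obtain ⟨δ, hδpos, hdec⟩ := DiagSetup.simplex_decomp hπ₀ ht0 ht1
    have hball : ∀ᶠ y in nhdsWithin π₀ Sx, dist y π₀ < δ := by
      have hmem : Metric.ball π₀ δ ∈ nhds π₀ := Metric.ball_mem_nhds _ hδpos
      exact Filter.mem_of_superset (nhdsWithin_le_nhds hmem) fun y hy => hy
    filter_upwards [hball, self_mem_nhdsWithin] with y hdist hy
    obtain ⟨z, hz, hyz⟩ := hdec y hy hdist
    have hconc := hV0conc.2 hπ₀ hz (by linarith : (0:ℝ) ≤ 1 - t) ht0.le (by ring)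
    rw [← hyz] at hconc
    have h1 : 0 ≤ V0 z := hV0nonneg z hz
    have h2 : V0 π₀ ≤ S.Abnd := hV0le π₀ hπ₀
    have h3 : t * V0 π₀ ≤ t * S.Abnd := mul_le_mul_of_nonneg_left h2 ht0.le
    simp only [smul_eq_mul] at hconc
    nlinarith [mul_nonneg ht0.le h1]
  · -- upper semicontinuity: V0 is an infimum of continuous functions
    intro b hb
    have hev : ∀ᶠ N in atTop, S.V N π₀ < b := (hV0 π₀ hπ₀).eventually_lt_const hb
    obtain ⟨N, hN⟩ := hev.exists
    have hcont : ContinuousWithinAt (S.V N) Sx π₀ := (S.good_V N).1 π₀ hπ₀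
    have hev2 : ∀ᶠ y in nhdsWithin π₀ Sx, S.V N y < b := hcont.eventually_lt_const hN
    filter_upwards [hev2, self_mem_nhdsWithin] with y h1 h2
    exact lt_of_le_of_lt (hVle N y h2) h1
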